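/- Let k be a field of prime characteristic p, and suppose there exists a k-linear map φ : F_{k*}k → k with φ(1) = 1 (i.e., the Frobenius of k splits). Then the polynomial ring k[X₁,…,Xₙ] is Frobenius split, via the map sending Σ a_ν X^ν to Σ_{ν ∈ p·ℤ≥0ⁿ} φ(a_ν) X^{ν/p}. -/

import Mathlib

/-- If the Frobenius of a field `k` of characteristic `p` splits via `φ`, then the
polynomial ring `k[X₁,…,Xₙ]` is Frobenius split via the map sending `Σ a_ν X^ν` to
`Σ_{ν ∈ p·ℤ≥0ⁿ} φ(a_ν) X^(ν/p)` (whose coefficient at `ν` is `φ` of the coefficient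
at `p • ν`). -/
theorem mvPolynomial_frobeniusSplit_of_field_split {k : Type*} [Field k] (p : ℕ)
    [Fact p.Prime] [CharP k p] (φ : k →+ k)
    (hφlin : ∀ c x : k, φ (c ^ p * x) = c * φ x) (hφ1 : φ 1 = 1) (n : ℕ) :
    ∃ Ψ : MvPolynomial (Fin n) k →+ MvPolynomial (Fin n) k,
      (∀ r x : MvPolynomial (Fin n) k, Ψ (r ^ p * x) = r * Ψ x) ∧
      Ψ 1 = 1 ∧
      ∀ (f : MvPolynomial (Fin n) k) (ν : Fin n →₀ ℕ),
        MvPolynomial.coeff ν (Ψ f) = φ (MvPolynomial.coeff (p • ν) f) := by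
  have hp : p ≠ 0 := (Fact.out : p.Prime).ne_zero
  have hinj : Function.Injective (fun ν : Fin n →₀ ℕ => p • ν) := by
    intro a b h
    ext i
    have := DFunLike.congr_fun h i
    simp only [Finsupp.smul_apply, smul_eq_mul] at this
    exact Nat.eq_of_mul_eq_mul_left hp.bot_lt this
  refine ⟨AddMonoidHom.mk' (fun f => AddMonoidAlgebra.ofCoeff (
      Finsupp.mapRange φ φ.map_zero
        (Finsupp.comapDomain (fun ν => p • ν) (AddMonoidAlgebra.coeff f) hinj.injOn))) ?_, ?_, ?_, ?_⟩
  · intro f g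
    ext ν
    show φ (MvPolynomial.coeff (p • ν) (f + g)) =
      φ (MvPolynomial.coeff (p • ν) f) + φ (MvPolynomial.coeff (p • ν) g)
    rw [MvPolynomial.coeff_add, map_add]
  · intro r x
    induction r using MvPolynomial.induction_on' with
    | monomial μ c =>
      ext ν
      show φ (MvPolynomial.coeff (p • ν) (MvPolynomial.monomial μ c ^ p * x)) = _
      rw [MvPolynomial.monomial_pow]
      rw [MvPolynomial.coeff_monomial_mul']
      rw [MvPolynomial.coeff_monomial_mul']
      by_cases h : μ ≤ ν
      · have h' : p • μ ≤ p • ν := fun i => by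
          have := h i
          simp only [Finsupp.smul_apply, smul_eq_mul]
          exact Nat.mul_le_mul_left _ (h i)
        rw [if_pos h, if_pos h']
        have hsub : p • ν - p • μ = p • (ν - μ) := by
          ext i
          simp [Nat.mul_sub]
        rw [hsub, hφlin]
        rfl
      · have h' : ¬ p • μ ≤ p • ν := by
          intro hc
          refine h fun i => ?_
          have := hc i
          simp only [Finsupp.smul_apply, smul_eq_mul] at this
          exact Nat.le_of_mul_le_mul_left this hp.bot_lt
        rw [if_neg h, if_neg h', map_zero]
    | add f g hf hg =>
      rw [add_pow_char, add_mul, map_add, hf, hg, add_mul]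
  · ext ν
    show φ (MvPolynomial.coeff (p • ν) 1) = MvPolynomial.coeff ν 1
    rw [MvPolynomial.coeff_one, MvPolynomial.coeff_one]
    by_cases h : ν = 0
    · simp [h, hφ1]
    · have h1 : ¬ ((0 : Fin n →₀ ℕ) = p • ν) := fun hc => h (hinj (show p • ν = p • 0 by simp [← hc]))
      have h2 : ¬ ((0 : Fin n →₀ ℕ) = ν) := fun hc => h hc.symm
      rw [if_neg h1, if_neg h2, map_zero]
  · intro f ν
    rfl
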